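/- If u : [a,b] → ℝ is convex and v : [a,b] → ℝ is nonnegative, integrable and symmetric about (a+b)/2 (i.e. v(a+b-x) = v(x)), then u((a+b)/2) ∫_a^b v(y) dy ≤ ∫_a^b u(y)v(y) dy ≤ ((u(a)+u(b))/2) ∫_a^b v(y) dy. -/

import Mathlib

open Real MeasureTheory

theorem hermite_hadamard_fejer
    (a b : ℝ) (hab : a < b) (u v : ℝ → ℝ)
    (hconv : ∀ x ∈ Set.Icc a b, ∀ y ∈ Set.Icc a b, ∀ μ ∈ Set.Icc (0:ℝ) 1,
      u (μ * x + (1 - μ) * y) ≤ μ * u x + (1 - μ) * u y)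
    (hu : IntervalIntegrable u volume a b)
    (hv : IntervalIntegrable v volume a b)
    (hvnonneg : ∀ x ∈ Set.Icc a b, 0 ≤ v x)
    (hvsym : ∀ x ∈ Set.Icc a b, v (a + b - x) = v x)
    (huv : IntervalIntegrable (fun y => u y * v y) volume a b) :
    u ((a + b) / 2) * (∫ y in a..b, v y) ≤ (∫ y in a..b, u y * v y) ∧
      (∫ y in a..b, u y * v y) ≤ ((u a + u b) / 2) * ∫ y in a..b, v y := by
  have hab' : a ≤ b := hab.le
  have hba : (0:ℝ) < b - a := by linarith
  -- the reflected function
  set g : ℝ → ℝ := fun y => u (a + b - y) * v (a + b - y) with hg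
  have hgint : IntervalIntegrable g volume a b := by
    have := huv.comp_sub_left (a + b)
    simpa [hg] using this.symm
  -- membership of reflection
  have hmem : ∀ y ∈ Set.Icc a b, a + b - y ∈ Set.Icc a b := by
    intro y hy; exact ⟨by linarith [hy.2], by linarith [hy.1]⟩
  -- g agrees with u(a+b-y)*v(y) on [[a,b]]
  have heq : Set.EqOn g (fun y => u (a + b - y) * v y) (Set.uIcc a b) := by
    intro y hy
    rw [Set.uIcc_of_le hab'] at hy
    simp only [hg, hvsym y hy]
  have hg2int : IntervalIntegrable (fun y => u (a + b - y) * v y) volume a b := by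
    refine hgint.congr ?_
    intro y hy
    exact heq (Set.uIoc_subset_uIcc hy)
  -- ∫ g = ∫ u v
  have hKJ : (∫ y in a..b, u (a + b - y) * v y) = ∫ y in a..b, u y * v y := by
    rw [← intervalIntegral.integral_congr heq]
    have := intervalIntegral.integral_comp_sub_left (a := a) (b := b)
      (fun y => u y * v y) (a + b)
    simp only [add_sub_cancel_right, add_sub_cancel_left] at this
    exact this
  -- pointwise lower bound
  have hlow : ∀ y ∈ Set.Icc a b,
      u ((a + b) / 2) * v y ≤ (u y * v y + u (a + b - y) * v y) / 2 := by
    intro y hy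
    have h := hconv y hy (a + b - y) (hmem y hy) (1/2) (by norm_num)
    have hmid : (1/2 : ℝ) * y + (1 - 1/2) * (a + b - y) = (a + b) / 2 := by ring
    rw [hmid] at h
    have hv0 := hvnonneg y hy
    nlinarith [mul_le_mul_of_nonneg_right h hv0]
  -- pointwise upper bound
  have hupp : ∀ y ∈ Set.Icc a b,
      (u y * v y + u (a + b - y) * v y) / 2 ≤ (u a + u b) / 2 * v y := by
    intro y hy
    have ha' : a ∈ Set.Icc a b := ⟨le_refl a, hab'⟩
    have hb' : b ∈ Set.Icc a b := ⟨hab', le_refl b⟩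
    set μ : ℝ := (b - y) / (b - a) with hμ
    have hμ01 : μ ∈ Set.Icc (0:ℝ) 1 := by
      constructor
      · exact div_nonneg (by linarith [hy.2]) hba.le
      · rw [div_le_one hba]; linarith [hy.1]
    have hμ01' : 1 - μ ∈ Set.Icc (0:ℝ) 1 := ⟨by linarith [hμ01.2], by linarith [hμ01.1]⟩
    have h1 := hconv a ha' b hb' μ hμ01
    have h2 := hconv a ha' b hb' (1 - μ) hμ01'
    have e1 : μ * a + (1 - μ) * b = y := by
      linear_combination -(div_mul_cancel₀ (b - y) hba.ne' : μ * (b - a) = b - y)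
    have e2 : (1 - μ) * a + (1 - (1 - μ)) * b = a + b - y := by
      linear_combination (div_mul_cancel₀ (b - y) hba.ne' : μ * (b - a) = b - y)
    rw [e1] at h1; rw [e2] at h2
    have hv0 := hvnonneg y hy
    nlinarith [mul_le_mul_of_nonneg_right h1 hv0, mul_le_mul_of_nonneg_right h2 hv0]
  -- integrability of middle function
  have hmidint : IntervalIntegrable (fun y => (u y * v y + u (a + b - y) * v y) / 2)
      volume a b := (huv.add hg2int).div_const 2
  -- lower inequality
  have L : u ((a + b) / 2) * (∫ y in a..b, v y) ≤
      ∫ y in a..b, (u y * v y + u (a + b - y) * v y) / 2 := by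
    rw [← intervalIntegral.integral_const_mul]
    exact intervalIntegral.integral_mono_on hab' (hv.const_mul _) hmidint hlow
  have U : (∫ y in a..b, (u y * v y + u (a + b - y) * v y) / 2) ≤
      (u a + u b) / 2 * ∫ y in a..b, v y := by
    rw [← intervalIntegral.integral_const_mul]
    exact intervalIntegral.integral_mono_on hab' hmidint (hv.const_mul _) hupp
  have hM : (∫ y in a..b, (u y * v y + u (a + b - y) * v y) / 2) =
      ∫ y in a..b, u y * v y := by
    rw [intervalIntegral.integral_div, intervalIntegral.integral_add huv hg2int, hKJ]
    ring
  rw [hM] at L U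
  exact ⟨L, U⟩
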